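/- Let d ≥ 1 be an integer and let z₁, z₂ ∈ ℂ satisfy T_d(z₁) = T_d(z₂). Then there exist φ ∈ ℂ and a natural number k with k < d such that z₁ = cos φ and z₂ = cos(φ + 2πk/d), where cos denotes the complex cosine function. -/
import Mathlib

open Polynomial Polynomial.Chebyshev Complex

lemma aux9 (d : ℕ) (hd : 1 ≤ d) (a b : ℂ) (n : ℤ)
    (hb : (d : ℂ) * b = 2 * n * Real.pi + (d : ℂ) * a) :
    ∃ k : ℕ, k < d ∧ Complex.cos b =
      Complex.cos (a + 2 * (Real.pi : ℂ) * (k : ℂ) / (d : ℂ)) := by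
  have hdz : (d : ℤ) ≠ 0 := by exact_mod_cast Nat.one_le_iff_ne_zero.mp hd
  have hd0 : (d : ℂ) ≠ 0 := Nat.cast_ne_zero.mpr (Nat.one_le_iff_ne_zero.mp hd)
  set k : ℕ := (n % (d : ℤ)).toNat with hkdef
  have hk : (k : ℤ) = n % (d : ℤ) := Int.toNat_of_nonneg (Int.emod_nonneg _ hdz)
  refine ⟨k, ?_, ?_⟩
  · have h1 : n % (d : ℤ) < d := Int.emod_lt_of_pos n (by exact_mod_cast hd)
    omega
  · have key : b = a + 2 * (Real.pi : ℂ) * (k : ℂ) / (d : ℂ) + (↑(n / (d : ℤ)) : ℂ) * (2 * Real.pi) := by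
      have hsum : ((k : ℤ) : ℂ) + (d : ℂ) * (↑(n / (d : ℤ)) : ℂ) = (n : ℂ) := by
        rw [hk]
        have := Int.emod_add_mul_ediv n (d : ℤ)
        have : ((n % (d:ℤ) + (d:ℤ) * (n / (d:ℤ)) : ℤ) : ℂ) = (n : ℂ) := by exact_mod_cast congrArg (Int.cast : ℤ → ℂ) this
        push_cast at this
        linear_combination this
      field_simp
      push_cast at hsum ⊢
      linear_combination hb - 2 * Real.pi * hsum
    rw [key, Complex.cos_add_int_mul_two_pi]

theorem stmt9 (d : ℕ) (hd : 1 ≤ d) (z₁ z₂ : ℂ) (h : (T ℂ d).eval z₁ = (T ℂ d).eval z₂) :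
    ∃ (φ : ℂ) (k : ℕ), k < d ∧ z₁ = Complex.cos φ ∧
      z₂ = Complex.cos (φ + 2 * (Real.pi : ℂ) * (k : ℂ) / (d : ℂ)) := by
  obtain ⟨a, ha⟩ := Complex.cos_surjective z₁
  obtain ⟨b, hb⟩ := Complex.cos_surjective z₂
  rw [← ha, ← hb, T_complex_cos, T_complex_cos, Complex.cos_eq_cos_iff] at h
  obtain ⟨n, hn | hn⟩ := h
  · obtain ⟨k, hk, hcos⟩ := aux9 d hd a b n (by push_cast at hn ⊢; linear_combination hn)
    exact ⟨a, k, hk, ha.symm, by rw [← hb, hcos]⟩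
  · obtain ⟨k, hk, hcos⟩ := aux9 d hd (-a) b n (by push_cast at hn ⊢; linear_combination hn)
    exact ⟨-a, k, hk, by rw [Complex.cos_neg, ha], by rw [← hb, hcos]⟩
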